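/- Let $\kappa > 1$, $p > 0$, $\bar{\beta} > 0$, and $\bar{q} = (\bar{q}_1,\bar{q}_2) \in \mathbb{R}^2$ with $\bar{q}_1, \bar{q}_2 > 0$, and set $c_1 = -\frac{\bar{q}_1}{\kappa - 1}$, $c_2 = \frac{\kappa\, \bar{q}_2}{\kappa - 1}$. For $R > 0$, define $H_R(\theta) = R^p + \frac{\bar{\beta}}{2}\big( (\frac{R}{\sqrt{\kappa}}\cos\theta - \bar{q}_1)^2 + (R\sin\theta - \bar{q}_2)^2 \big)$ and the ellipse parametrisation $z_1(\theta;R) = \frac{R}{\sqrt{\kappa}}\cos\theta$, $z_2(\theta;R) = R\sin\theta$. Then for every $\theta$, the derivative of $H_R$ satisfies $H_R'(\theta) = \bar{\beta}\,\frac{\kappa - 1}{\sqrt{\kappa}}\,\big( (z_1(\theta;R) - c_1)(z_2(\theta;R) - c_2) - c_1 c_2 \big)$; in particular, $H_R'(\theta)$ is zero (respectively positive, negative) if and only if $(z_1(\theta;R) - c_1)(z_2(\theta;R) - c_2) - c_1 c_2$ is zero (respectively positive, negative). -/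
import Mathlib


/-- Derivative of the restriction `H_R` of the proximal objective to the ellipse
`E_R = {z : κz₁² + z₂² = R²}`: for all `θ`,
`H_R'(θ) = β̄ (κ-1)/√κ ((z₁(θ)-c₁)(z₂(θ)-c₂) - c₁c₂)`;
in particular `H_R'(θ)` is zero (resp. positive, negative) iff
`(z₁(θ)-c₁)(z₂(θ)-c₂) - c₁c₂` is zero (resp. positive, negative). -/
theorem stmt6 (κ p β q1 q2 R : ℝ) (hκ : 1 < κ) (hp : 0 < p) (hβ : 0 < β)
    (hq1 : 0 < q1) (hq2 : 0 < q2) (hR : 0 < R) :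
    let c1 : ℝ := -q1 / (κ - 1)
    let c2 : ℝ := κ * q2 / (κ - 1)
    let z1 : ℝ → ℝ := fun θ => R / Real.sqrt κ * Real.cos θ
    let z2 : ℝ → ℝ := fun θ => R * Real.sin θ
    let HR : ℝ → ℝ := fun θ =>
      R ^ p + β / 2 * ((z1 θ - q1) ^ 2 + (z2 θ - q2) ^ 2)
    ∀ θ : ℝ,
      HasDerivAt HR
        (β * (κ - 1) / Real.sqrt κ * ((z1 θ - c1) * (z2 θ - c2) - c1 * c2)) θ ∧
      (deriv HR θ = 0 ↔ (z1 θ - c1) * (z2 θ - c2) - c1 * c2 = 0) ∧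
      (0 < deriv HR θ ↔ 0 < (z1 θ - c1) * (z2 θ - c2) - c1 * c2) ∧
      (deriv HR θ < 0 ↔ (z1 θ - c1) * (z2 θ - c2) - c1 * c2 < 0) := by
  intro c1 c2 z1 z2 HR θ
  obtain ⟨s, hs0, rfl⟩ : ∃ s, 0 < s ∧ s ^ 2 = κ :=
    ⟨Real.sqrt κ, Real.sqrt_pos.mpr (by linarith), Real.sq_sqrt (by linarith)⟩
  have hsq : Real.sqrt (s ^ 2) = s := Real.sqrt_sq hs0.le
  have hs1 : (1 : ℝ) < s := by nlinarith
  have hκ1 : s ^ 2 - 1 ≠ 0 := by nlinarith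
  have hc : 0 < β * (s ^ 2 - 1) / Real.sqrt (s ^ 2) := by
    rw [hsq]; exact div_pos (mul_pos hβ (by nlinarith)) hs0
  have hd : HasDerivAt HR
      (β * (s ^ 2 - 1) / Real.sqrt (s ^ 2) * ((z1 θ - c1) * (z2 θ - c2) - c1 * c2)) θ := by
    have h1 : HasDerivAt z1 (R / Real.sqrt (s ^ 2) * (-Real.sin θ)) θ :=
      (Real.hasDerivAt_cos θ).const_mul _
    have h2 : HasDerivAt z2 (R * Real.cos θ) θ :=
      (Real.hasDerivAt_sin θ).const_mul _
    have h3 : HasDerivAt HR (β / 2 *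
        (2 * (z1 θ - q1) * (R / Real.sqrt (s ^ 2) * (-Real.sin θ)) +
         2 * (z2 θ - q2) * (R * Real.cos θ))) θ := by
      have := (((h1.sub_const q1).pow 2).add ((h2.sub_const q2).pow 2)).const_mul (β / 2)
      simpa [HR, mul_comm, mul_left_comm, mul_assoc] using (this.const_add (R ^ p))
    convert h3 using 1
    simp only [z1, z2, c1, c2, hsq]
    field_simp
    ring
  refine ⟨hd, ?_, ?_, ?_⟩ <;> rw [hd.deriv]
  · constructor
    · intro h
      rcases mul_eq_zero.mp h with h | h
      · exact absurd h (ne_of_gt hc)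
      · exact h
    · intro h; rw [h, mul_zero]
  · exact mul_pos_iff_of_pos_left hc
  · constructor
    · intro h; nlinarith
    · intro h; nlinarith
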